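/- Let H be an N×K complex matrix admitting a compact singular value decomposition H = U · diag(s) · Vᴴ with Uᴴ U = I, V unitary, and s i > 0 for all i. Let P_ZF = H (HᴴH)⁻¹ be the zero-forcing precoder, and let P_PGP = diag(t) · Wᴴ be a PGP precoder, where t : Fin K → ℝ and W is a K×K unitary matrix. Then the total power of the combined ZF-PGP precoder satisfies trace((P_ZF · P_PGP)(P_ZF · P_PGP)ᴴ) = trace(M · diag(t²)), where M = V · diag(s⁻²) · Vᴴ and diag(t²) has diagonal entries (t m)². -/

import Mathlib

open Matrix

/-- Total power of the combined ZF-PGP precoder: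
`trace((P_ZF P_PGP)(P_ZF P_PGP)ᴴ) = trace(M * diag(t²))`
with `M = V * diag(s⁻²) * Vᴴ`. -/
theorem zf_pgp_power (N K : ℕ)
    (H : Matrix (Fin N) (Fin K) ℂ)
    (U : Matrix (Fin N) (Fin K) ℂ)
    (V : Matrix (Fin K) (Fin K) ℂ) (hV : V ∈ Matrix.unitaryGroup (Fin K) ℂ)
    (s : Fin K → ℝ) (hs : ∀ i, 0 < s i)
    (hU : Uᴴ * U = 1)
    (hH : H = U * Matrix.diagonal (fun i => (s i : ℂ)) * Vᴴ)
    (t : Fin K → ℝ)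
    (W : Matrix (Fin K) (Fin K) ℂ) (hW : W ∈ Matrix.unitaryGroup (Fin K) ℂ) :
    Matrix.trace
      (((H * (Hᴴ * H)⁻¹) * (Matrix.diagonal (fun m => (t m : ℂ)) * Wᴴ)) *
        ((H * (Hᴴ * H)⁻¹) * (Matrix.diagonal (fun m => (t m : ℂ)) * Wᴴ))ᴴ)
      = Matrix.trace
          ((V * Matrix.diagonal (fun i => (1 / (s i : ℂ) ^ 2)) * Vᴴ) *
            Matrix.diagonal (fun m => ((t m : ℂ) ^ 2))) := by
  have hsne : ∀ i, (s i : ℂ) ≠ 0 := fun i => by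
    exact_mod_cast Complex.ofReal_ne_zero.mpr (ne_of_gt (hs i))
  have hVV : Vᴴ * V = 1 := by
    simpa [Matrix.star_eq_conjTranspose] using hV.1
  have hVV' : V * Vᴴ = 1 := by
    simpa [Matrix.star_eq_conjTranspose] using hV.2
  have hWW : Wᴴ * W = 1 := by
    simpa [Matrix.star_eq_conjTranspose] using hW.1
  have hHc : Hᴴ = V * Matrix.diagonal (fun i => (s i : ℂ)) * Uᴴ := by
    rw [hH]
    simp [Matrix.conjTranspose_mul, Matrix.diagonal_conjTranspose, Matrix.mul_assoc,
      Function.comp, Pi.star_def, Complex.star_def, Complex.conj_ofReal]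
  have key : Hᴴ * H = V * Matrix.diagonal (fun i => (s i : ℂ) ^ 2) * Vᴴ := by
    rw [hHc, hH]
    calc V * Matrix.diagonal (fun i => (s i : ℂ)) * Uᴴ *
          (U * Matrix.diagonal (fun i => (s i : ℂ)) * Vᴴ)
        = V * Matrix.diagonal (fun i => (s i : ℂ)) * (Uᴴ * U) *
            Matrix.diagonal (fun i => (s i : ℂ)) * Vᴴ := by
          simp only [Matrix.mul_assoc]
      _ = V * (Matrix.diagonal (fun i => (s i : ℂ)) *
            Matrix.diagonal (fun i => (s i : ℂ))) * Vᴴ := by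
          rw [hU]; simp only [Matrix.mul_one, Matrix.mul_assoc]
      _ = V * Matrix.diagonal (fun i => (s i : ℂ) ^ 2) * Vᴴ := by
          rw [Matrix.diagonal_mul_diagonal]; ring_nf
  have hinv : (Hᴴ * H)⁻¹ = V * Matrix.diagonal (fun i => 1 / (s i : ℂ) ^ 2) * Vᴴ := by
    apply Matrix.inv_eq_right_inv
    rw [key]
    calc V * Matrix.diagonal (fun i => (s i : ℂ) ^ 2) * Vᴴ *
          (V * Matrix.diagonal (fun i => 1 / (s i : ℂ) ^ 2) * Vᴴ)
        = V * Matrix.diagonal (fun i => (s i : ℂ) ^ 2) * (Vᴴ * V) *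
            Matrix.diagonal (fun i => 1 / (s i : ℂ) ^ 2) * Vᴴ := by
          simp only [Matrix.mul_assoc]
      _ = V * (Matrix.diagonal (fun i => (s i : ℂ) ^ 2) *
            Matrix.diagonal (fun i => 1 / (s i : ℂ) ^ 2)) * Vᴴ := by
          rw [hVV]; simp only [Matrix.mul_one, Matrix.mul_assoc]
      _ = V * Vᴴ := by
          rw [Matrix.diagonal_mul_diagonal]
          have : (fun i => (s i : ℂ) ^ 2 * (1 / (s i : ℂ) ^ 2)) = fun _ => (1 : ℂ) := by
            funext i
            field_simp [pow_ne_zero 2 (hsne i)]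
            exact div_self (hsne i)
          rw [this, Matrix.diagonal_one, Matrix.mul_one]
      _ = 1 := hVV'
  have hP : H * (Hᴴ * H)⁻¹ = U * Matrix.diagonal (fun i => 1 / (s i : ℂ)) * Vᴴ := by
    rw [hinv, hH]
    calc U * Matrix.diagonal (fun i => (s i : ℂ)) * Vᴴ *
          (V * Matrix.diagonal (fun i => 1 / (s i : ℂ) ^ 2) * Vᴴ)
        = U * Matrix.diagonal (fun i => (s i : ℂ)) * (Vᴴ * V) *
            Matrix.diagonal (fun i => 1 / (s i : ℂ) ^ 2) * Vᴴ := by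
          simp only [Matrix.mul_assoc]
      _ = U * (Matrix.diagonal (fun i => (s i : ℂ)) *
            Matrix.diagonal (fun i => 1 / (s i : ℂ) ^ 2)) * Vᴴ := by
          rw [hVV]; simp only [Matrix.mul_one, Matrix.mul_assoc]
      _ = U * Matrix.diagonal (fun i => 1 / (s i : ℂ)) * Vᴴ := by
          rw [Matrix.diagonal_mul_diagonal]
          have : (fun i => (s i : ℂ) * (1 / (s i : ℂ) ^ 2)) = fun i => 1 / (s i : ℂ) := by
            funext i
            field_simp [hsne i]
          rw [this]
  rw [hP]
  have hPc : (U * Matrix.diagonal (fun i => 1 / (s i : ℂ)) * Vᴴ)ᴴ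
      = V * Matrix.diagonal (fun i => 1 / (s i : ℂ)) * Uᴴ := by
    simp [Matrix.conjTranspose_mul, Matrix.diagonal_conjTranspose, Matrix.mul_assoc,
      Pi.star_def, Complex.star_def, Complex.conj_ofReal]
  have hDtc : (Matrix.diagonal (fun m => (t m : ℂ)) * Wᴴ)ᴴ
      = W * Matrix.diagonal (fun m => (t m : ℂ)) := by
    simp [Matrix.conjTranspose_mul, Matrix.diagonal_conjTranspose,
      Pi.star_def, Complex.star_def, Complex.conj_ofReal]
  rw [Matrix.conjTranspose_mul, hPc, hDtc]
  -- now all explicit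
  set D1 := Matrix.diagonal (fun i => 1 / (s i : ℂ)) with hD1
  set Dt := Matrix.diagonal (fun m => (t m : ℂ)) with hDt
  have expand : (U * D1 * Vᴴ * (Dt * Wᴴ)) * (W * Dt * (V * D1 * Uᴴ))
      = U * (D1 * (Vᴴ * (Dt * Dt * V)) * D1) * Uᴴ := by
    calc (U * D1 * Vᴴ * (Dt * Wᴴ)) * (W * Dt * (V * D1 * Uᴴ))
        = U * D1 * Vᴴ * Dt * (Wᴴ * W) * Dt * V * D1 * Uᴴ := by
          simp only [Matrix.mul_assoc]
      _ = U * (D1 * (Vᴴ * (Dt * Dt * V)) * D1) * Uᴴ := by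
          rw [hWW]; simp only [Matrix.mul_one, Matrix.mul_assoc]
  rw [expand]
  rw [Matrix.trace_mul_comm (U * (D1 * (Vᴴ * (Dt * Dt * V)) * D1)) Uᴴ,
    ← Matrix.mul_assoc, hU, Matrix.one_mul]
  rw [Matrix.trace_mul_comm (D1 * (Vᴴ * (Dt * Dt * V))) D1, ← Matrix.mul_assoc]
  have hDD : D1 * D1 = Matrix.diagonal (fun i => 1 / (s i : ℂ) ^ 2) := by
    rw [hD1, Matrix.diagonal_mul_diagonal]
    have : (fun i => 1 / (s i : ℂ) * (1 / (s i : ℂ))) = fun i => 1 / (s i : ℂ) ^ 2 := by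
      funext i; ring
    rw [this]
  have hDtt : Dt * Dt = Matrix.diagonal (fun m => (t m : ℂ) ^ 2) := by
    rw [hDt, Matrix.diagonal_mul_diagonal]
    have : (fun m => (t m : ℂ) * (t m : ℂ)) = fun m => (t m : ℂ) ^ 2 := by
      funext m; ring
    rw [this]
  rw [hDD, hDtt]
  simp only [← Matrix.mul_assoc]
  rw [Matrix.trace_mul_comm (Matrix.diagonal (fun i => 1 / (s i : ℂ) ^ 2) * Vᴴ *
    Matrix.diagonal (fun m => (t m : ℂ) ^ 2)) V]
  simp only [← Matrix.mul_assoc]
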